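/- Let C be an oriented linear chord diagram of d chords. Define C_+^∧ := {(i_k+1, j_k+1) : (i_k,j_k) ∈ C} ∪ {(1, 2d+2)} and C_−^∧ := {(i_k+1, j_k+1) : (i_k,j_k) ∈ C} ∪ {(2d+2, 1)}, both oriented linear chord diagrams of d+1 chords. Then ⟨C_+^∧⟩ = (−A³)·⟨C⟩ and ⟨C_−^∧⟩ = (−A⁻³)·⟨C⟩. -/

import Mathlib

open Equiv LaurentPolynomial Finset

/-- `C` is an oriented linear chord diagram of `d` chords: a set of `d` ordered pairs of
integers whose entries (first and second components together) are exactly `{1, …, 2d}`.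
(Together with `C.card = d` this forces all `2d` entries to be pairwise distinct.) -/
def IsOLCD (d : ℕ) (C : Finset (ℤ × ℤ)) : Prop :=
  C.card = d ∧ (C.image Prod.fst ∪ C.image Prod.snd) = Finset.Icc 1 (2 * (d : ℤ))

/-- The set `R_c` of transpositions of `ℤ` associated to a chord `c = (i, j)` carrying the
label `lbl` (`true` = `A`, `false` = `B`). -/
def Rset (lbl : Bool) (c : ℤ × ℤ) : Set (Equiv.Perm ℤ) :=
  if lbl = decide (c.1 < c.2) then
    {Equiv.swap c.1 (c.2 - 1), Equiv.swap (c.1 - 1) c.2}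
  else
    {Equiv.swap c.1 c.2, Equiv.swap (c.1 - 1) (c.2 - 1)}

/-- The subgroup of permutations generated by `⋃_{c ∈ C} R_c`, for a state `s` of `C`. -/
def stateGroup (C : Finset (ℤ × ℤ)) (s : {c // c ∈ C} → Bool) : Subgroup (Equiv.Perm ℤ) :=
  Subgroup.closure (⋃ c : {c // c ∈ C}, Rset (s c) c.1)

/-- `Γ_s`: the number of orbits of the action of `stateGroup C s` on `{0, 1, …, 2d}`,
counted as the number of distinct orbits of elements of `{0, …, 2d}`. -/
noncomputable def Gamma (d : ℕ) (C : Finset (ℤ × ℤ)) (s : {c // c ∈ C} → Bool) : ℕ :=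
  ((fun x : ℤ => MulAction.orbit (stateGroup C s) x) '' Set.Icc (0 : ℤ) (2 * d)).ncard

/-- `⟨C|s⟩ = A^(|s⁻¹(A)| - |s⁻¹(B)|) * (-A² - A⁻²)^(Γ_s - 1)`. -/
noncomputable def bracketTerm (d : ℕ) (C : Finset (ℤ × ℤ)) (s : {c // c ∈ C} → Bool) :
    LaurentPolynomial ℤ :=
  T (((Finset.univ.filter fun c => s c = true).card : ℤ) -
      ((Finset.univ.filter fun c => s c = false).card : ℤ)) *
    (-T 2 - T (-2)) ^ (Gamma d C s - 1)

/-- The bracket polynomial `⟨C⟩ = Σ_s ⟨C|s⟩`, summing over all `2^d` states of `C`. -/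
noncomputable def bracket (d : ℕ) (C : Finset (ℤ × ℤ)) : LaurentPolynomial ℤ :=
  ∑ s : ({c // c ∈ C} → Bool), bracketTerm d C s

/-- The maximal exponent occurring in a Laurent polynomial (junk value `0` for `f = 0`). -/
noncomputable def maxDeg (f : LaurentPolynomial ℤ) : ℤ := f.coeff.support.max.unbotD 0

/-- The minimal exponent occurring in a Laurent polynomial (junk value `0` for `f = 0`). -/
noncomputable def minDeg (f : LaurentPolynomial ℤ) : ℤ := f.coeff.support.min.untopD 0

/-- The span of a Laurent polynomial: maximal minus minimal exponent. -/
noncomputable def spanL (f : LaurentPolynomial ℤ) : ℤ := maxDeg f - minDeg f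

section Orel

/-- orbit relation of the closure of a set of permutations -/
def orel (S : Set (Perm ℤ)) (x y : ℤ) : Prop :=
  y ∈ MulAction.orbit (Subgroup.closure S) x

lemma orel_refl (S : Set (Perm ℤ)) (x : ℤ) : orel S x x := MulAction.mem_orbit_self x

lemma orel_symm {S : Set (Perm ℤ)} {x y : ℤ} (h : orel S x y) : orel S y x :=
  MulAction.mem_orbit_symm.mp h

lemma orel_trans {S : Set (Perm ℤ)} {x y z : ℤ} (h : orel S x y) (h' : orel S y z) :
    orel S x z := by
  unfold orel at *
  rw [← MulAction.orbit_eq_iff.mpr h]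
  exact h'

lemma orel_of_gen {S : Set (Perm ℤ)} {g : Perm ℤ} (hg : g ∈ S) (a : ℤ) : orel S a (g a) := by
  have : (⟨g, Subgroup.subset_closure hg⟩ : Subgroup.closure S) • a = g a := rfl
  exact this ▸ MulAction.mem_orbit a _

lemma orel_le_invariant (S : Set (Perm ℤ)) (q : ℤ → ℤ → Prop)
    (hrefl : ∀ a, q a a) (hsymm : ∀ a b, q a b → q b a)
    (htrans : ∀ a b c, q a b → q b c → q a c)
    (hgen : ∀ g ∈ S, ∀ a, q a (g a)) :
    ∀ x y, orel S x y → q x y := by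
  have key : ∀ g ∈ Subgroup.closure S, ∀ a, q a (g a) := by
    intro g hg
    induction hg using Subgroup.closure_induction with
    | mem x hx => exact hgen x hx
    | one => intro a; simpa using hrefl a
    | mul x y hx hy px py =>
        intro a
        have h1 := py a
        have h2 := px (y a)
        have : (x * y) a = x (y a) := rfl
        rw [this]
        exact htrans _ _ _ h1 h2
    | inv x hx px =>
        intro a
        have := px (x⁻¹ a)
        have e : x (x⁻¹ a) = a := Equiv.apply_symm_apply x a
        rw [e] at this
        exact hsymm _ _ this
  rintro x y ⟨⟨g, hg⟩, rfl⟩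
  exact key g hg x

lemma q_swap {q : ℤ → ℤ → Prop} (hrefl : ∀ a, q a a) (hsymm : ∀ a b, q a b → q b a)
    {u v : ℤ} (huv : q u v) (a : ℤ) : q a (Equiv.swap u v a) := by
  rcases eq_or_ne a u with rfl | hau
  · rw [Equiv.swap_apply_left]; exact huv
  rcases eq_or_ne a v with rfl | hav
  · rw [Equiv.swap_apply_right]; exact hsymm _ _ huv
  · rw [Equiv.swap_apply_of_ne_of_ne hau hav]; exact hrefl a

lemma orel_map (S S' : Set (Perm ℤ)) (f : ℤ → ℤ)
    (h : ∀ g ∈ S, ∀ a, ∃ g' ∈ S', g' (f a) = f (g a)) :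
    ∀ x y, orel S x y → orel S' (f x) (f y) := by
  refine orel_le_invariant S (fun a b => orel S' (f a) (f b)) (fun a => orel_refl _ _)
    (fun a b => orel_symm) (fun a b c => orel_trans) ?_
  intro g hg a
  obtain ⟨g', hg', e⟩ := h g hg a
  have := orel_of_gen hg' (f a)
  rwa [e] at this

end Orel

section Count

lemma class_eq_of_rel {r : ℤ → ℤ → Prop} (hsymm : ∀ a b, r a b → r b a)
    (htrans : ∀ a b c, r a b → r b c → r a c) {x y : ℤ} (h : r x y) :
    {z | r x z} = {z | r y z} := by
  ext z
  exact ⟨fun hz => htrans _ _ _ (hsymm _ _ h) hz, fun hz => htrans _ _ _ h hz⟩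

lemma count_transport (r r' : ℤ → ℤ → Prop)
    (hr_refl : ∀ a, r a a) (hr_symm : ∀ a b, r a b → r b a)
    (hr_trans : ∀ a b c, r a b → r b c → r a c)
    (hr'_refl : ∀ a, r' a a) (hr'_symm : ∀ a b, r' a b → r' b a)
    (hr'_trans : ∀ a b c, r' a b → r' b c → r' a c)
    (A A' : Set ℤ) (φ : ℤ → ℤ)
    (hmap : ∀ x ∈ A, φ x ∈ A')
    (honto : ∀ y ∈ A', ∃ x ∈ A, r' (φ x) y)
    (hiff : ∀ x ∈ A, ∀ y ∈ A, (r x y ↔ r' (φ x) (φ y))) :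
    ((fun x => {y | r' x y}) '' A').ncard = ((fun x => {y | r x y}) '' A).ncard := by
  set F : Set ℤ → Set ℤ := fun O => {y | ∃ x ∈ A, x ∈ O ∧ r' (φ x) y} with hF_def
  have hF : ∀ x ∈ A, F {y | r x y} = {y | r' (φ x) y} := by
    intro x hx
    ext y
    constructor
    · rintro ⟨x', hx'A, hx'O, hr'y⟩
      exact hr'_trans _ _ _ ((hiff x hx x' hx'A).mp hx'O) hr'y
    · intro h
      exact ⟨x, hx, hr_refl x, h⟩
  have himg : (fun x => {y | r' x y}) '' A' = F '' ((fun x => {y | r x y}) '' A) := by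
    apply Set.Subset.antisymm
    · rintro _ ⟨y', hy'A', rfl⟩
      obtain ⟨x, hxA, hr'xy'⟩ := honto y' hy'A'
      refine ⟨{y | r x y}, ⟨x, hxA, rfl⟩, ?_⟩
      rw [hF x hxA]
      show {y | r' (φ x) y} = {y | r' y' y}
      exact class_eq_of_rel hr'_symm hr'_trans hr'xy'
    · rintro _ ⟨_, ⟨x, hxA, rfl⟩, rfl⟩
      rw [hF x hxA]
      exact ⟨φ x, hmap x hxA, rfl⟩
  have hinj : Set.InjOn F ((fun x => {y | r x y}) '' A) := by
    rintro _ ⟨x, hxA, rfl⟩ _ ⟨y, hyA, rfl⟩ h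
    rw [hF x hxA, hF y hyA] at h
    have : r' (φ y) (φ x) := by
      have : φ y ∈ {z | r' (φ x) z} := h ▸ hr'_refl (φ y)
      exact hr'_symm _ _ this
    have hrxy : r x y := (hiff x hxA y hyA).mpr (hr'_symm _ _ this)
    exact class_eq_of_rel hr_symm hr_trans hrxy
  rw [himg, Set.ncard_image_of_injOn hinj]

end Count

section OLCD

variable {d : ℕ} {C : Finset (ℤ × ℤ)}

lemma entry_mem (hC : IsOLCD d C) {c : ℤ × ℤ} (hc : c ∈ C) :
    (1 ≤ c.1 ∧ c.1 ≤ 2 * (d : ℤ)) ∧ (1 ≤ c.2 ∧ c.2 ≤ 2 * (d : ℤ)) := by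
  have h1 : c.1 ∈ C.image Prod.fst ∪ C.image Prod.snd :=
    Finset.mem_union_left _ (Finset.mem_image_of_mem _ hc)
  have h2 : c.2 ∈ C.image Prod.fst ∪ C.image Prod.snd :=
    Finset.mem_union_right _ (Finset.mem_image_of_mem _ hc)
  rw [hC.2, Finset.mem_Icc] at h1 h2
  exact ⟨h1, h2⟩

lemma entry_sum (hC : IsOLCD d C) (f : ℤ → ℤ) :
    ∑ c ∈ C, (f c.1 + f c.2) = ∑ k ∈ Finset.Icc (1 : ℤ) (2 * d), f k := by
  classical
  have hcard : (C.image Prod.fst ∪ C.image Prod.snd).card = 2 * d := by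
    rw [hC.2, Int.card_Icc]
    omega
  have h1 : (C.image Prod.fst).card ≤ d := le_trans (Finset.card_image_le) (le_of_eq hC.1)
  have h2 : (C.image Prod.snd).card ≤ d := le_trans (Finset.card_image_le) (le_of_eq hC.1)
  have hCc : C.card = d := hC.1
  have hsum := Finset.card_union_add_card_inter (C.image Prod.fst) (C.image Prod.snd)
  have hinter : (C.image Prod.fst ∩ C.image Prod.snd).card = 0 := by omega
  have hfst : (C.image Prod.fst).card = C.card := by omega
  have hsnd : (C.image Prod.snd).card = C.card := by omega
  have hdisj : Disjoint (C.image Prod.fst) (C.image Prod.snd) := by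
    rw [Finset.disjoint_iff_inter_eq_empty, ← Finset.card_eq_zero]
    exact hinter
  have e1 : ∑ k ∈ C.image Prod.fst, f k = ∑ c ∈ C, f c.1 :=
    Finset.sum_image fun x hx y hy h => Finset.card_image_iff.mp hfst hx hy h
  have e2 : ∑ k ∈ C.image Prod.snd, f k = ∑ c ∈ C, f c.2 :=
    Finset.sum_image fun x hx y hy h => Finset.card_image_iff.mp hsnd hx hy h
  rw [← hC.2, Finset.sum_union hdisj, e1, e2, ← Finset.sum_add_distrib]

/-- The generating set of `stateGroup C s`. -/
def smallGens (C : Finset (ℤ × ℤ)) (s : {c // c ∈ C} → Bool) : Set (Perm ℤ) :=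
  ⋃ c : {c // c ∈ C}, Rset (s c) c.1

lemma stateGroup_eq (s : {c // c ∈ C} → Bool) :
    stateGroup C s = Subgroup.closure (smallGens C s) := rfl

lemma smallGens_shape (hC : IsOLCD d C) (s : {c // c ∈ C} → Bool) :
    ∀ g ∈ smallGens C s, ∃ u v : ℤ, g = Equiv.swap u v ∧
      0 ≤ u ∧ u ≤ 2 * d ∧ 0 ≤ v ∧ v ≤ 2 * d := by
  intro g hg
  obtain ⟨c, hgc⟩ := Set.mem_iUnion.mp hg
  obtain ⟨⟨hf1, hf2⟩, ⟨hs1, hs2⟩⟩ := entry_mem hC c.2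
  unfold Rset at hgc
  split at hgc <;> rcases hgc with rfl | rfl
  · exact ⟨c.1.1, c.1.2 - 1, rfl, by omega, by omega, by omega, by omega⟩
  · exact ⟨c.1.1 - 1, c.1.2, by simpa using rfl, by omega, by omega, by omega, by omega⟩
  · exact ⟨c.1.1, c.1.2, rfl, by omega, by omega, by omega, by omega⟩
  · exact ⟨c.1.1 - 1, c.1.2 - 1, by simpa using rfl, by omega, by omega, by omega, by omega⟩

/-- The key topological fact: `0` and `2d` always lie in the same orbit. -/
lemma handshake (hC : IsOLCD d C) (s : {c // c ∈ C} → Bool) :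
    orel (smallGens C s) 0 (2 * d) := by
  classical
  rcases Nat.eq_zero_or_pos d with rfl | hd
  · simpa using orel_refl (smallGens C s) 0
  set K : Set ℤ := {y | orel (smallGens C s) 0 y} with hK_def
  set ind : ℤ → ℤ := fun x => if x ∈ K then 1 else 0 with hind_def
  have hswap : ∀ u v : ℤ, Equiv.swap u v ∈ smallGens C s → (u ∈ K ↔ v ∈ K) := by
    intro u v hmem
    have huv : orel (smallGens C s) u v := by
      have := orel_of_gen hmem u
      rwa [Equiv.swap_apply_left] at this
    exact ⟨fun h => orel_trans h huv, fun h => orel_trans h (orel_symm huv)⟩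
  have indeq : ∀ u v : ℤ, Equiv.swap u v ∈ smallGens C s → ind u = ind v := by
    intro u v hmem
    simp only [hind_def]
    exact if_congr (hswap u v hmem) rfl rfl
  have hchord : ∀ c ∈ C, (2 : ℤ) ∣ (ind c.1 + ind (c.1 - 1) + ind c.2 + ind (c.2 - 1)) := by
    intro c hc
    have hmem1 : ∀ g ∈ Rset (s ⟨c, hc⟩) c, g ∈ smallGens C s := fun g hg =>
      Set.mem_iUnion.mpr ⟨⟨c, hc⟩, hg⟩
    unfold Rset at hmem1
    split at hmem1
    · have e1 := indeq c.1 (c.2 - 1) (hmem1 _ (by left; rfl))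
      have e2 := indeq (c.1 - 1) c.2 (hmem1 _ (by right; rfl))
      exact ⟨ind c.1 + ind (c.1 - 1), by rw [← e1, ← e2]; ring⟩
    · have e1 := indeq c.1 c.2 (hmem1 _ (by left; rfl))
      have e2 := indeq (c.1 - 1) (c.2 - 1) (hmem1 _ (by right; rfl))
      exact ⟨ind c.1 + ind (c.1 - 1), by rw [← e1, ← e2]; ring⟩
  have hbig : (2 : ℤ) ∣ ∑ c ∈ C, (ind c.1 + ind (c.1 - 1) + ind c.2 + ind (c.2 - 1)) :=
    Finset.dvd_sum hchord
  have hsplit : ∑ c ∈ C, (ind c.1 + ind (c.1 - 1) + ind c.2 + ind (c.2 - 1)) =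
      (∑ c ∈ C, (ind c.1 + ind c.2)) + ∑ c ∈ C, (ind (c.1 - 1) + ind (c.2 - 1)) := by
    rw [← Finset.sum_add_distrib]
    exact Finset.sum_congr rfl fun c _ => by ring
  have hsum1 : ∑ c ∈ C, (ind c.1 + ind c.2) = ∑ k ∈ Finset.Icc (1 : ℤ) (2 * d), ind k :=
    entry_sum hC ind
  have hsum2 : ∑ c ∈ C, (ind (c.1 - 1) + ind (c.2 - 1)) =
      ∑ k ∈ Finset.Icc (0 : ℤ) (2 * d - 1), ind k := by
    rw [entry_sum hC (fun k => ind (k - 1))]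
    rw [show Finset.Icc (1 : ℤ) (2 * d) = (Finset.Icc (0 : ℤ) (2 * d - 1)).map
      (addRightEmbedding 1) by rw [Finset.map_add_right_Icc]; norm_num]
    rw [Finset.sum_map]
    exact Finset.sum_congr rfl fun k _ => by simp [addRightEmbedding]
  have hIcc1 : Finset.Icc (1 : ℤ) (2 * d) = insert (2 * (d : ℤ)) (Finset.Icc (1 : ℤ) (2 * d - 1)) := by
    ext k; simp only [Finset.mem_Icc, Finset.mem_insert]; omega
  have hIcc2 : Finset.Icc (0 : ℤ) (2 * d - 1) = insert (0 : ℤ) (Finset.Icc (1 : ℤ) (2 * d - 1)) := by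
    ext k; simp only [Finset.mem_Icc, Finset.mem_insert]; omega
  have hnm1 : (2 * (d : ℤ)) ∉ Finset.Icc (1 : ℤ) (2 * d - 1) := by
    simp only [Finset.mem_Icc]; omega
  have hnm2 : (0 : ℤ) ∉ Finset.Icc (1 : ℤ) (2 * d - 1) := by
    simp only [Finset.mem_Icc]; omega
  rw [hsplit, hsum1, hsum2, hIcc1, hIcc2, Finset.sum_insert hnm1, Finset.sum_insert hnm2] at hbig
  have hind0 : ind 0 = 1 := by
    simp only [hind_def, if_pos (show (0 : ℤ) ∈ K from orel_refl _ 0)]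
  by_contra hcon
  have hind2d : ind (2 * d) = 0 := by
    simp only [hind_def, if_neg (show ¬ (2 * (d : ℤ)) ∈ K from hcon)]
  rw [hind0, hind2d] at hbig
  obtain ⟨m, hm⟩ := hbig
  omega

end OLCD
section Shift

variable {d : ℕ} {C : Finset (ℤ × ℤ)}

/-- Generators of the shifted copy of `C` inside the extended diagram. -/
def bigOldGens (C : Finset (ℤ × ℤ)) (s : {c // c ∈ C} → Bool) : Set (Perm ℤ) :=
  ⋃ c : {c // c ∈ C}, Rset (s c) (c.1.1 + 1, c.1.2 + 1)

lemma swap_shift (u v : ℤ) :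
    Equiv.swap (u + 1) (v + 1) =
      (Equiv.addRight (1 : ℤ)) * Equiv.swap u v * (Equiv.addRight (1 : ℤ))⁻¹ := by
  have := Equiv.swap_apply_apply (Equiv.addRight (1 : ℤ)) u v
  simpa using this

lemma Rset_conj (lbl : Bool) (i j : ℤ) :
    Rset lbl (i + 1, j + 1) =
      (fun g => (Equiv.addRight (1 : ℤ)) * g * (Equiv.addRight (1 : ℤ))⁻¹) '' Rset lbl (i, j) := by
  have hd : (decide ((i + 1 : ℤ) < (j + 1)) : Bool) = decide (i < j) := by
    simp [decide_eq_decide]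
  unfold Rset
  simp only [hd]
  split
  · rw [Set.image_insert_eq, Set.image_singleton, ← swap_shift, ← swap_shift]
    norm_num
  · rw [Set.image_insert_eq, Set.image_singleton, ← swap_shift, ← swap_shift]
    norm_num

lemma bigOldGens_eq (s : {c // c ∈ C} → Bool) :
    bigOldGens C s =
      (fun g => (Equiv.addRight (1 : ℤ)) * g * (Equiv.addRight (1 : ℤ))⁻¹) '' smallGens C s := by
  unfold bigOldGens smallGens
  rw [Set.image_iUnion]
  exact Set.iUnion_congr fun c => Rset_conj (s c) c.1.1 c.1.2

lemma bigOldGens_shape (hC : IsOLCD d C) (s : {c // c ∈ C} → Bool) :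
    ∀ g ∈ bigOldGens C s, ∃ u v : ℤ, g = Equiv.swap (u + 1) (v + 1) ∧
      Equiv.swap u v ∈ smallGens C s ∧ 0 ≤ u ∧ u ≤ 2 * d ∧ 0 ≤ v ∧ v ≤ 2 * d := by
  intro g hg
  rw [bigOldGens_eq] at hg
  obtain ⟨g₀, hg₀, rfl⟩ := hg
  obtain ⟨u, v, rfl, h1, h2, h3, h4⟩ := smallGens_shape hC s g₀ hg₀
  exact ⟨u, v, (swap_shift u v).symm ▸ rfl, hg₀, h1, h2, h3, h4⟩

/-- forward transport: the orbit relation of `C` maps into that of the extended diagram. -/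
lemma orel_forward (s : {c // c ∈ C} → Bool) (NEW : Set (Perm ℤ)) {x y : ℤ}
    (h : orel (smallGens C s) x y) : orel (NEW ∪ bigOldGens C s) (x + 1) (y + 1) := by
  refine orel_map (smallGens C s) (NEW ∪ bigOldGens C s) (· + 1) ?_ x y h
  intro g hg a
  refine ⟨(Equiv.addRight (1 : ℤ)) * g * (Equiv.addRight (1 : ℤ))⁻¹,
    Set.mem_union_right _ (by rw [bigOldGens_eq]; exact ⟨g, hg, rfl⟩), ?_⟩
  simp

/-- backward transport along a retraction `ψ`. -/
lemma orel_backward (hC : IsOLCD d C) (s : {c // c ∈ C} → Bool) (NEW : Set (Perm ℤ))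
    (ψ : ℤ → ℤ) (hψold : ∀ x : ℤ, 1 ≤ x → x ≤ 2 * d + 1 → ψ x = x - 1)
    (hnew : ∀ g ∈ NEW, ∃ u v : ℤ, g = Equiv.swap u v ∧ orel (smallGens C s) (ψ u) (ψ v))
    {x y : ℤ} (h : orel (NEW ∪ bigOldGens C s) x y) : orel (smallGens C s) (ψ x) (ψ y) := by
  set q : ℤ → ℤ → Prop := fun a b => orel (smallGens C s) (ψ a) (ψ b) with hq
  have hrefl : ∀ a, q a a := fun a => orel_refl _ _
  have hsymm : ∀ a b, q a b → q b a := fun a b => orel_symm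
  have htrans : ∀ a b c, q a b → q b c → q a c := fun a b c => orel_trans
  refine orel_le_invariant _ q hrefl hsymm htrans ?_ x y h
  intro g hg a
  rcases hg with hg | hg
  · obtain ⟨u, v, rfl, huv⟩ := hnew g hg
    exact q_swap hrefl hsymm huv a
  · obtain ⟨u, v, rfl, hmem, h1, h2, h3, h4⟩ := bigOldGens_shape hC s g hg
    have huv : q (u + 1) (v + 1) := by
      show orel _ (ψ (u + 1)) (ψ (v + 1))
      rw [hψold (u + 1) (by omega) (by omega), hψold (v + 1) (by omega) (by omega)]
      have := orel_of_gen hmem u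
      rw [Equiv.swap_apply_left] at this
      simpa using this
    exact q_swap hrefl hsymm huv a

end Shift

section GammaCount

variable {d : ℕ} {C : Finset (ℤ × ℤ)}

/-- new generators in the A-type state of the added chord -/
def newRsetA (d : ℕ) : Set (Perm ℤ) :=
  {Equiv.swap 1 (2 * (d : ℤ) + 1), Equiv.swap 0 (2 * (d : ℤ) + 2)}

/-- new generators in the B-type state of the added chord -/
def newRsetB (d : ℕ) : Set (Perm ℤ) :=
  {Equiv.swap 1 (2 * (d : ℤ) + 2), Equiv.swap 0 (2 * (d : ℤ) + 1)}

lemma orbit_setOf (S : Set (Perm ℤ)) :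
    (fun x : ℤ => MulAction.orbit (Subgroup.closure S) x) = fun x => {y | orel S x y} :=
  funext fun x => (Set.setOf_mem_eq).symm

lemma Gamma_eq (s : {c // c ∈ C} → Bool) :
    Gamma d C s = ((fun x => {y | orel (smallGens C s) x y}) '' Set.Icc (0 : ℤ) (2 * d)).ncard := by
  unfold Gamma
  rw [stateGroup_eq, orbit_setOf]

lemma orel_neg_one (hC : IsOLCD d C) (s : {c // c ∈ C} → Bool) :
    ∀ x, orel (smallGens C s) (-1) x → x = -1 := by
  intro x hx
  set q : ℤ → ℤ → Prop := fun a b => (a = -1 ↔ b = -1) with hq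
  have hrefl : ∀ a, q a a := fun a => Iff.rfl
  have hsymm : ∀ a b, q a b → q b a := fun a b h => h.symm
  have htrans : ∀ a b c, q a b → q b c → q a c := fun a b c h h' => h.trans h'
  have := orel_le_invariant (smallGens C s) q hrefl hsymm htrans ?_ _ _ hx
  · exact this.mp rfl
  · intro g hg a
    obtain ⟨u, v, rfl, h1, h2, h3, h4⟩ := smallGens_shape hC s g hg
    refine q_swap hrefl hsymm ?_ a
    exact iff_of_false (by omega) (by omega)

lemma bigGammaB (hC : IsOLCD d C) (s : {c // c ∈ C} → Bool) :
    ((fun x => {y | orel (newRsetB d ∪ bigOldGens C s) x y}) ''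
        Set.Icc (0 : ℤ) (2 * (d : ℤ) + 2)).ncard = Gamma d C s := by
  rw [Gamma_eq s]
  set NEW := newRsetB d
  have hg1 : Equiv.swap 1 (2 * (d : ℤ) + 2) ∈ NEW ∪ bigOldGens C s :=
    Set.mem_union_left _ (Set.mem_insert _ _)
  have hg2 : Equiv.swap 0 (2 * (d : ℤ) + 1) ∈ NEW ∪ bigOldGens C s :=
    Set.mem_union_left _ (Set.mem_insert_of_mem _ rfl)
  refine count_transport _ _ (fun a => orel_refl _ _) (fun a b => orel_symm)
    (fun a b c => orel_trans) (fun a => orel_refl _ _) (fun a b => orel_symm)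
    (fun a b c => orel_trans) _ _ (· + 1) ?_ ?_ ?_
  · intro x hx
    rw [Set.mem_Icc] at hx
    show x + 1 ∈ Set.Icc (0 : ℤ) (2 * (d : ℤ) + 2)
    rw [Set.mem_Icc]
    omega
  · intro y hy
    rw [Set.mem_Icc] at hy
    rcases eq_or_ne y 0 with rfl | hy0
    · refine ⟨2 * d, by rw [Set.mem_Icc]; omega, ?_⟩
      have := orel_of_gen hg2 0
      rw [Equiv.swap_apply_left] at this
      show orel _ (2 * (d : ℤ) + 1) 0
      exact orel_symm this
    rcases eq_or_ne y (2 * (d : ℤ) + 2) with rfl | hy2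
    · refine ⟨0, by rw [Set.mem_Icc]; omega, ?_⟩
      have := orel_of_gen hg1 1
      rw [Equiv.swap_apply_left] at this
      simpa using this
    · refine ⟨y - 1, by rw [Set.mem_Icc]; omega, ?_⟩
      show orel _ (y - 1 + 1) y
      have : y - 1 + 1 = y := by ring
      rw [this]
      exact orel_refl _ _
  · intro x hx y hy
    rw [Set.mem_Icc] at hx hy
    constructor
    · exact fun h => orel_forward s NEW h
    · intro h
      set ψ : ℤ → ℤ := fun t => if t = 0 then 2 * (d : ℤ) else if t = 2 * (d : ℤ) + 2 then 0 else t - 1 with hψ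
      have hψold : ∀ t : ℤ, 1 ≤ t → t ≤ 2 * (d : ℤ) + 1 → ψ t = t - 1 := by
        intro t h1 h2
        simp only [hψ, if_neg (by omega : ¬ t = 0), if_neg (by omega : ¬ t = 2 * (d : ℤ) + 2)]
      have hnew : ∀ g ∈ NEW, ∃ u v : ℤ, g = Equiv.swap u v ∧
          orel (smallGens C s) (ψ u) (ψ v) := by
        intro g hg
        rcases hg with rfl | rfl
        · refine ⟨1, 2 * (d : ℤ) + 2, rfl, ?_⟩
          have e1 : ψ 1 = 0 := by rw [hψold 1 (by omega) (by omega)]; norm_num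
          have e2 : ψ (2 * (d : ℤ) + 2) = 0 := by
            simp only [hψ]
            rw [if_neg (by omega : ¬(2 * (d : ℤ) + 2) = 0)]
            simp
          rw [e1, e2]; exact orel_refl _ _
        · refine ⟨0, 2 * (d : ℤ) + 1, rfl, ?_⟩
          have e1 : ψ 0 = 2 * (d : ℤ) := by simp only [hψ, if_pos rfl]
          have e2 : ψ (2 * (d : ℤ) + 1) = 2 * (d : ℤ) := by
            rw [hψold _ (by omega) (by omega)]; ring
          rw [e1, e2]; exact orel_refl _ _
      have := orel_backward hC s NEW ψ hψold hnew h
      rwa [hψold (x + 1) (by omega) (by omega), hψold (y + 1) (by omega) (by omega),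
        add_sub_cancel_right, add_sub_cancel_right] at this

lemma bigGammaA (hC : IsOLCD d C) (s : {c // c ∈ C} → Bool) :
    ((fun x => {y | orel (newRsetA d ∪ bigOldGens C s) x y}) ''
        Set.Icc (0 : ℤ) (2 * (d : ℤ) + 2)).ncard = Gamma d C s + 1 := by
  set NEW := newRsetA d
  have hg1 : Equiv.swap 1 (2 * (d : ℤ) + 1) ∈ NEW ∪ bigOldGens C s :=
    Set.mem_union_left _ (Set.mem_insert _ _)
  have hg2 : Equiv.swap 0 (2 * (d : ℤ) + 2) ∈ NEW ∪ bigOldGens C s :=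
    Set.mem_union_left _ (Set.mem_insert_of_mem _ rfl)
  set ψ : ℤ → ℤ := fun t => if t = 2 * (d : ℤ) + 2 then -1 else t - 1 with hψ
  have hψ' : ∀ x : ℤ, x ≤ 2 * (d : ℤ) → ψ (x + 1) = x := by
    intro x h
    simp only [hψ]
    rw [if_neg (by omega)]
    ring
  have hψold : ∀ t : ℤ, 1 ≤ t → t ≤ 2 * (d : ℤ) + 1 → ψ t = t - 1 := by
    intro t h1 h2
    simp only [hψ]
    rw [if_neg (by omega)]
  have hnew : ∀ g ∈ NEW, ∃ u v : ℤ, g = Equiv.swap u v ∧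
      orel (smallGens C s) (ψ u) (ψ v) := by
    intro g hg
    rcases hg with rfl | rfl
    · refine ⟨1, 2 * (d : ℤ) + 1, rfl, ?_⟩
      have e1 : ψ 1 = 0 := by rw [hψold 1 (by omega) (by omega)]; norm_num
      have e2 : ψ (2 * (d : ℤ) + 1) = 2 * (d : ℤ) := by
        rw [hψold _ (by omega) (by omega)]; ring
      rw [e1, e2]
      exact handshake hC s
    · refine ⟨0, 2 * (d : ℤ) + 2, rfl, ?_⟩
      have e1 : ψ 0 = -1 := by simp only [hψ]; rw [if_neg (by omega)]; norm_num
      have e2 : ψ (2 * (d : ℤ) + 2) = -1 := by simp only [hψ]; simp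
      rw [e1, e2]
      exact orel_refl _ _
  have step1 : ((fun x => {y | orel (NEW ∪ bigOldGens C s) x y}) ''
      Set.Icc (0 : ℤ) (2 * (d : ℤ) + 2)).ncard =
      ((fun x => {y | orel (smallGens C s) x y}) ''
        (insert (-1 : ℤ) (Set.Icc (0 : ℤ) (2 * d)))).ncard := by
    refine count_transport _ _ (fun a => orel_refl _ _) (fun a b => orel_symm)
      (fun a b c => orel_trans) (fun a => orel_refl _ _) (fun a b => orel_symm)
      (fun a b c => orel_trans) _ _ (· + 1) ?_ ?_ ?_
    · intro x hx
      simp only [Set.mem_insert_iff, Set.mem_Icc] at hx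
      show x + 1 ∈ Set.Icc (0 : ℤ) (2 * (d : ℤ) + 2)
      rw [Set.mem_Icc]
      omega
    · intro y hy
      rw [Set.mem_Icc] at hy
      rcases eq_or_ne y (2 * (d : ℤ) + 2) with rfl | hy2
      · refine ⟨-1, Set.mem_insert _ _, ?_⟩
        have := orel_of_gen hg2 0
        rw [Equiv.swap_apply_left] at this
        show orel _ (-1 + 1) (2 * (d : ℤ) + 2)
        simpa using this
      · refine ⟨y - 1, by simp only [Set.mem_insert_iff, Set.mem_Icc]; omega, ?_⟩
        show orel _ (y - 1 + 1) y
        have : y - 1 + 1 = y := by ring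
        rw [this]
        exact orel_refl _ _
    · intro x hx y hy
      simp only [Set.mem_insert_iff, Set.mem_Icc] at hx hy
      constructor
      · exact fun h => orel_forward s NEW h
      · intro h
        have := orel_backward hC s NEW ψ hψold hnew h
        rwa [hψ' x (by omega), hψ' y (by omega)] at this
  rw [step1, Set.image_insert_eq]
  have hnotmem : ¬ ({y | orel (smallGens C s) (-1) y} ∈
      (fun x => {y | orel (smallGens C s) x y}) '' Set.Icc (0 : ℤ) (2 * d)) := by
    rintro ⟨x, hx, hcl⟩
    have hm : (-1 : ℤ) ∈ {y | orel (smallGens C s) (-1) y} := orel_refl _ _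
    rw [← hcl] at hm
    have : x = -1 := orel_neg_one hC s x (orel_symm hm)
    rw [Set.mem_Icc] at hx
    omega
  rw [Set.ncard_insert_of_notMem hnotmem (((Set.finite_Icc _ _).image _))]
  rw [Gamma_eq s]

end GammaCount

section Extend

variable (C : Finset (ℤ × ℤ)) (x₀ : ℤ × ℤ)

/-- index equivalence between `Option {c // c ∈ C}` and the extended diagram. -/
def eIdx (hne : ∀ p ∈ C, ((p.1 + 1 : ℤ), (p.2 + 1 : ℤ)) ≠ x₀) :
    Option {c // c ∈ C} ≃ {c' // c' ∈ insert x₀ (C.image fun p => (p.1 + 1, p.2 + 1))} where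
  toFun o := o.elim ⟨x₀, Finset.mem_insert_self _ _⟩
    (fun c => ⟨(c.1.1 + 1, c.1.2 + 1),
      Finset.mem_insert_of_mem (Finset.mem_image_of_mem _ c.2)⟩)
  invFun c' :=
    if h : c'.1 = x₀ then none
    else some ⟨(c'.1.1 - 1, c'.1.2 - 1), by
      rcases Finset.mem_insert.mp c'.2 with h' | h'
      · exact absurd h' h
      · obtain ⟨q, hq, he⟩ := Finset.mem_image.mp h'
        rw [← he]
        simpa using hq⟩
  left_inv o := by
    rcases o with _ | c
    · simp
    · have h : ¬ ((c.1.1 + 1, c.1.2 + 1) : ℤ × ℤ) = x₀ := hne c.1 c.2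
      simp only [Option.elim]
      refine (dif_neg h).trans ?_
      congr 1
      exact Subtype.ext (by simp)
  right_inv c' := by
    dsimp only
    by_cases h : c'.1 = x₀
    · rw [dif_pos h]
      exact Subtype.ext h.symm
    · rw [dif_neg h]
      exact Subtype.ext (by simp)

/-- extension of a state `s` of `C` by value `b` on the new chord `x₀`. -/
def extSt (hne : ∀ p ∈ C, ((p.1 + 1 : ℤ), (p.2 + 1 : ℤ)) ≠ x₀) (b : Bool)
    (s : {c // c ∈ C} → Bool) :
    {c' // c' ∈ insert x₀ (C.image fun p => (p.1 + 1, p.2 + 1))} → Bool :=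
  fun c' => ((eIdx C x₀ hne).symm c').elim b s

variable (hne : ∀ p ∈ C, ((p.1 + 1 : ℤ), (p.2 + 1 : ℤ)) ≠ x₀) (b : Bool)
  (s : {c // c ∈ C} → Bool)

lemma extSt_none : extSt C x₀ hne b s ((eIdx C x₀ hne) none) = b := by
  unfold extSt
  rw [Equiv.symm_apply_apply]
  rfl

lemma extSt_some (c : {c // c ∈ C}) :
    extSt C x₀ hne b s ((eIdx C x₀ hne) (some c)) = s c := by
  unfold extSt
  rw [Equiv.symm_apply_apply]
  rfl

/-- the equivalence of state spaces. -/
def stEquiv : (Bool × ({c // c ∈ C} → Bool)) ≃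
    ({c' // c' ∈ insert x₀ (C.image fun p => (p.1 + 1, p.2 + 1))} → Bool) where
  toFun p := extSt C x₀ hne p.1 p.2
  invFun s' := (s' ((eIdx C x₀ hne) none), fun c => s' ((eIdx C x₀ hne) (some c)))
  left_inv p := by
    refine Prod.ext ?_ ?_
    · exact extSt_none C x₀ hne p.1 p.2
    · exact funext fun c => extSt_some C x₀ hne p.1 p.2 c
  right_inv s' := by
    funext c'
    dsimp only
    have hc' : c' = (eIdx C x₀ hne) ((eIdx C x₀ hne).symm c') :=
      ((eIdx C x₀ hne).apply_symm_apply c').symm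
    rw [hc']
    generalize (eIdx C x₀ hne).symm c' = o
    rcases o with _ | c
    · rw [extSt_none]
    · rw [extSt_some]

lemma gens_eq :
    smallGens (insert x₀ (C.image fun p => (p.1 + 1, p.2 + 1))) (extSt C x₀ hne b s) =
      Rset b x₀ ∪ bigOldGens C s := by
  unfold smallGens bigOldGens
  ext g
  simp only [Set.mem_iUnion, Set.mem_union]
  constructor
  · rintro ⟨c', hg⟩
    rcases Finset.mem_insert.mp c'.2 with h | h
    · left
      have hc' : c' = (eIdx C x₀ hne) none := Subtype.ext h
      rw [hc'] at hg
      rwa [extSt_none] at hg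
    · right
      obtain ⟨q, hq, he⟩ := Finset.mem_image.mp h
      have hc' : c' = (eIdx C x₀ hne) (some ⟨q, hq⟩) := Subtype.ext he.symm
      rw [hc'] at hg
      rw [extSt_some] at hg
      exact ⟨⟨q, hq⟩, hg⟩
  · rintro (hg | ⟨c, hg⟩)
    · refine ⟨(eIdx C x₀ hne) none, ?_⟩
      rwa [extSt_none]
    · refine ⟨(eIdx C x₀ hne) (some c), ?_⟩
      rwa [extSt_some]

lemma card_filter_ext (t : Bool) :
    (Finset.univ.filter fun c' => extSt C x₀ hne b s c' = t).card =
      (if b = t then 1 else 0) +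
        (Finset.univ.filter fun c => s c = t).card := by
  classical
  rw [Finset.card_filter, Finset.card_filter]
  rw [← Equiv.sum_comp (eIdx C x₀ hne) (fun c' => if extSt C x₀ hne b s c' = t then 1 else 0)]
  rw [Fintype.sum_option]
  congr 1
  · rw [extSt_none]
  · exact Finset.sum_congr rfl fun c _ => by rw [extSt_some]

end Extend

section NewChord

variable {d : ℕ}

lemma Rset_plus_true : Rset true ((1 : ℤ), 2 * (d : ℤ) + 2) = newRsetA d := by
  unfold Rset newRsetA
  have hd : (decide ((1 : ℤ) < 2 * (d : ℤ) + 2) : Bool) = true := decide_eq_true (by omega)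
  rw [hd, if_pos rfl]
  have e1 : (2 * (d : ℤ) + 2) - 1 = 2 * (d : ℤ) + 1 := by ring
  have e2 : (1 : ℤ) - 1 = 0 := by ring
  rw [show ((1 : ℤ), 2 * (d : ℤ) + 2).1 = (1 : ℤ) from rfl]
  rw [show ((1 : ℤ), 2 * (d : ℤ) + 2).2 = 2 * (d : ℤ) + 2 from rfl, e1, e2]

lemma Rset_plus_false : Rset false ((1 : ℤ), 2 * (d : ℤ) + 2) = newRsetB d := by
  unfold Rset newRsetB
  have hd : (decide ((1 : ℤ) < 2 * (d : ℤ) + 2) : Bool) = true := decide_eq_true (by omega)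
  rw [hd, if_neg (by simp)]
  have e1 : (2 * (d : ℤ) + 2) - 1 = 2 * (d : ℤ) + 1 := by ring
  have e2 : (1 : ℤ) - 1 = 0 := by ring
  rw [show ((1 : ℤ), 2 * (d : ℤ) + 2).1 = (1 : ℤ) from rfl]
  rw [show ((1 : ℤ), 2 * (d : ℤ) + 2).2 = 2 * (d : ℤ) + 2 from rfl, e1, e2]

lemma Rset_minus_true : Rset true (2 * (d : ℤ) + 2, (1 : ℤ)) = newRsetB d := by
  unfold Rset newRsetB
  have hd : (decide ((2 * (d : ℤ) + 2) < 1) : Bool) = false := decide_eq_false (by omega)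
  rw [hd, if_neg (by simp)]
  have e1 : (2 * (d : ℤ) + 2) - 1 = 2 * (d : ℤ) + 1 := by ring
  have e2 : (1 : ℤ) - 1 = 0 := by ring
  rw [show (2 * (d : ℤ) + 2, (1 : ℤ)).1 = 2 * (d : ℤ) + 2 from rfl]
  rw [show (2 * (d : ℤ) + 2, (1 : ℤ)).2 = (1 : ℤ) from rfl, e1, e2]
  rw [Equiv.swap_comm (2 * (d : ℤ) + 2) 1, Equiv.swap_comm (2 * (d : ℤ) + 1) 0]

lemma Rset_minus_false : Rset false (2 * (d : ℤ) + 2, (1 : ℤ)) = newRsetA d := by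
  unfold Rset newRsetA
  have hd : (decide ((2 * (d : ℤ) + 2) < 1) : Bool) = false := decide_eq_false (by omega)
  rw [hd, if_pos rfl]
  have e1 : (2 * (d : ℤ) + 2) - 1 = 2 * (d : ℤ) + 1 := by ring
  have e2 : (1 : ℤ) - 1 = 0 := by ring
  rw [show (2 * (d : ℤ) + 2, (1 : ℤ)).1 = 2 * (d : ℤ) + 2 from rfl]
  rw [show (2 * (d : ℤ) + 2, (1 : ℤ)).2 = (1 : ℤ) from rfl, e1, e2]
  rw [Equiv.swap_comm (2 * (d : ℤ) + 2) 0, Equiv.swap_comm (2 * (d : ℤ) + 1) 1,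
    Set.pair_comm]

end NewChord

section Assemble

lemma one_le_Gamma (d : ℕ) (C : Finset (ℤ × ℤ)) (s : {c // c ∈ C} → Bool) :
    1 ≤ Gamma d C s := by
  unfold Gamma
  have h0 : (0 : ℤ) ∈ Set.Icc (0 : ℤ) (2 * (d : ℤ)) := by
    rw [Set.mem_Icc]
    constructor
    · rfl
    · positivity
  exact (Set.ncard_pos ((Set.finite_Icc _ _).image _)).mpr
    ⟨_, Set.mem_image_of_mem _ h0⟩

variable (d : ℕ) (C : Finset (ℤ × ℤ)) (x₀ : ℤ × ℤ) (bA : Bool)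
  (hC : IsOLCD d C)
  (hne : ∀ p ∈ C, ((p.1 + 1 : ℤ), (p.2 + 1 : ℤ)) ≠ x₀)
  (hA : Rset bA x₀ = newRsetA d) (hB : Rset (!bA) x₀ = newRsetB d)

include hC hne hA hB in
lemma Gamma_ext (b : Bool) (s : {c // c ∈ C} → Bool) :
    Gamma (d + 1) (insert x₀ (C.image fun p => (p.1 + 1, p.2 + 1))) (extSt C x₀ hne b s) =
      Gamma d C s + (if b = bA then 1 else 0) := by
  rw [Gamma_eq, gens_eq]
  have hicc : (2 * ((d + 1 : ℕ) : ℤ)) = 2 * (d : ℤ) + 2 := by push_cast; ring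
  rw [hicc]
  by_cases hb : b = bA
  · rw [hb, hA, if_pos rfl]
    exact bigGammaA hC s
  · have hb' : b = !bA := by cases b <;> cases bA <;> simp_all
    rw [hb', hB, if_neg (by simpa using hb)]
    rw [bigGammaB hC s]
    omega

include hC hne hA hB in
lemma term_ext (b : Bool) (s : {c // c ∈ C} → Bool) :
    bracketTerm (d + 1) (insert x₀ (C.image fun p => (p.1 + 1, p.2 + 1)))
        (extSt C x₀ hne b s) =
      (T (if b then (1 : ℤ) else -1) *
        (if b = bA then (-T 2 - T (-2) : LaurentPolynomial ℤ) else 1)) *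
          bracketTerm d C s := by
  unfold bracketTerm
  rw [card_filter_ext, card_filter_ext, Gamma_ext d C x₀ bA hC hne hA hB]
  have hN : 1 ≤ Gamma d C s := one_le_Gamma d C s
  set na := (Finset.univ.filter fun c => s c = true).card with hna
  set nb := (Finset.univ.filter fun c => s c = false).card with hnb
  set N := Gamma d C s with hNN
  have e1 : (((1 + na : ℕ) : ℤ)) - ((0 + nb : ℕ) : ℤ) = 1 + ((na : ℤ) - nb) := by
    push_cast; ring
  have e0 : (((0 + na : ℕ) : ℤ)) - ((1 + nb : ℕ) : ℤ) = -1 + ((na : ℤ) - nb) := by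
    push_cast; ring
  have p1 : N + 1 - 1 = (N - 1) + 1 := by omega
  have p0 : N + 0 - 1 = N - 1 := by omega
  cases b <;> cases bA <;>
    simp only [reduceIte, Bool.false_eq_true, Bool.true_eq_false, if_true, if_false] <;>
    first
    | (rw [e0, T_add, p1, pow_succ]; ring)
    | (rw [e0, T_add, p0]; ring)
    | (rw [e1, T_add, p0]; ring)
    | (rw [e1, T_add, p1, pow_succ]; ring)

include hC hne hA hB in
lemma bracket_core :
    bracket (d + 1) (insert x₀ (C.image fun p => (p.1 + 1, p.2 + 1))) =
      (if bA then (-T 3 : LaurentPolynomial ℤ) else -T (-3)) * bracket d C := by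
  unfold bracket
  rw [← Equiv.sum_comp (stEquiv C x₀ hne)
    (fun s' => bracketTerm (d + 1) (insert x₀ (C.image fun p => (p.1 + 1, p.2 + 1))) s')]
  have happ : ∀ p : Bool × ({c // c ∈ C} → Bool),
      (stEquiv C x₀ hne) p = extSt C x₀ hne p.1 p.2 := fun p => rfl
  rw [Fintype.sum_prod_type]
  have hsum : ∀ b : Bool, ∑ s : ({c // c ∈ C} → Bool),
      bracketTerm (d + 1) (insert x₀ (C.image fun p => (p.1 + 1, p.2 + 1)))
        ((stEquiv C x₀ hne) (b, s)) =
      (T (if b then (1 : ℤ) else -1) *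
        (if b = bA then (-T 2 - T (-2) : LaurentPolynomial ℤ) else 1)) * bracket d C := by
    intro b
    unfold bracket
    rw [Finset.mul_sum]
    refine Finset.sum_congr rfl fun s _ => ?_
    rw [happ (b, s)]
    exact term_ext d C x₀ bA hC hne hA hB b s
  rw [Fintype.sum_bool, hsum true, hsum false, ← add_mul]
  congr 1
  have a1 : (T 1 : LaurentPolynomial ℤ) * T 2 = T 3 := by rw [← T_add]; norm_num
  have a2 : (T 1 : LaurentPolynomial ℤ) * T (-2) = T (-1) := by rw [← T_add]; norm_num
  have a3 : (T (-1) : LaurentPolynomial ℤ) * T 2 = T 1 := by rw [← T_add]; norm_num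
  have a4 : (T (-1) : LaurentPolynomial ℤ) * T (-2) = T (-3) := by rw [← T_add]; norm_num
  cases bA
  · simp only [if_true, if_false, Bool.true_eq_false, Bool.false_eq_true, reduceIte]
    have expand : (T 1 : LaurentPolynomial ℤ) * 1 + T (-1) * (-T 2 - T (-2)) =
        T 1 - T (-1) * T 2 - T (-1) * T (-2) := by ring
    rw [expand, a3, a4]
    ring
  · simp only [if_true, if_false, Bool.true_eq_false, Bool.false_eq_true, reduceIte]
    have expand : (T 1 : LaurentPolynomial ℤ) * (-T 2 - T (-2)) + T (-1) * 1 =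
        -(T 1 * T 2) - T 1 * T (-2) + T (-1) := by ring
    rw [expand, a1, a2]
    ring

end Assemble


open LaurentPolynomial in
/-- `⟨C₊^∧⟩ = (-A³)·⟨C⟩` and `⟨C₋^∧⟩ = (-A⁻³)·⟨C⟩`, where
`C₊^∧ = {(i+1, j+1) : (i,j) ∈ C} ∪ {(1, 2d+2)}` and
`C₋^∧ = {(i+1, j+1) : (i,j) ∈ C} ∪ {(2d+2, 1)}`. -/
theorem bracket_monogon_wedge (d : ℕ) (C : Finset (ℤ × ℤ)) (hC : IsOLCD d C) :
    bracket (d + 1) (insert ((1 : ℤ), 2 * (d : ℤ) + 2)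
        (C.image fun p => (p.1 + 1, p.2 + 1))) = (-T 3) * bracket d C ∧
    bracket (d + 1) (insert ((2 * (d : ℤ) + 2, (1 : ℤ)))
        (C.image fun p => (p.1 + 1, p.2 + 1))) = (-T (-3)) * bracket d C := by
  constructor
  · have hne : ∀ p ∈ C, ((p.1 + 1 : ℤ), (p.2 + 1 : ℤ)) ≠ ((1 : ℤ), 2 * (d : ℤ) + 2) := by
      intro p hp h
      obtain ⟨⟨h1, h2⟩, _⟩ := entry_mem hC hp
      have := congrArg Prod.fst h
      simp only [Prod.fst] at this
      omega
    have := bracket_core d C ((1 : ℤ), 2 * (d : ℤ) + 2) true hC hne Rset_plus_true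
      Rset_plus_false
    simpa using this
  · have hne : ∀ p ∈ C, ((p.1 + 1 : ℤ), (p.2 + 1 : ℤ)) ≠ ((2 * (d : ℤ) + 2), (1 : ℤ)) := by
      intro p hp h
      obtain ⟨⟨h1, h2⟩, _⟩ := entry_mem hC hp
      have := congrArg Prod.fst h
      simp only [Prod.fst] at this
      omega
    have := bracket_core d C ((2 * (d : ℤ) + 2), (1 : ℤ)) false hC hne Rset_minus_false
      Rset_minus_true
    simpa using this
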